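/- arXiv:1003.3730 — 3 statements merged into one kernel-verified Lean document; each statement's English description precedes it below -/
import Mathlib

section
/- Vanishing conditions for generalized elliptic 6j-symbols: For nonnegative integers M, N, generic λ ∈ ℂ, w ∈ (ℂ^×)^M, z ∈ (ℂ^×)^N, and subsets S,T ⊆ [M], U,V ⊆ [N] with |S|+|U| = |T|+|V|, if any one of the four conditions |V| < |S∖T|, |U| < |T∖S|, |S^c| < |U∖V|, |T^c| < |V∖U| holds, then R_{SU}^{TV}(λ; w; z) = 0. -/
noncomputable section
open Finset

/-- The theta function `θ(x) = ∏_{j≥0} (1-p^j x)(1-p^{j+1}/x)`. -/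
def theta (p x : ℂ) : ℂ := ∏' j : ℕ, (1 - p ^ j * x) * (1 - p ^ (j + 1) / x)

/-- The elliptic Pochhammer symbol `(x)_k = θ(x)θ(qx)⋯θ(q^{k-1}x)`. -/
def poch (p q x : ℂ) (k : ℕ) : ℂ := ∏ i ∈ Finset.range k, theta p (q ^ i * x)

/-- Genericity: no `q^ℤ`-translate of `u` or of `u⁻¹` is a zero of `θ`. -/
def Gen (p q u : ℂ) : Prop := ∀ k : ℤ, theta p (q ^ k * u) ≠ 0 ∧ theta p (q ^ k * u⁻¹) ≠ 0

/-- The elliptic weight function `Φ(w;z;a)`, defined for tuples of possibly different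
formal lengths (the sum over bijections `Fin m ≃ Fin n` is the sum over `S_n` when
`m = n`, and empty otherwise). -/
def Phi (p q : ℂ) {m n : ℕ} (w : Fin m → ℂ) (z : Fin n → ℂ) (a : ℂ) : ℂ :=
  ∑ σ : Fin m ≃ Fin n,
    (∏ i : Fin m, ∏ j : Fin m,
      if i < j then
        theta p (q * z (σ i) / z (σ j)) * theta p (w i / z (σ j)) /
          (theta p (z (σ i) / z (σ j)) * theta p (q * w i / z (σ j)))
      else 1) *
    ∏ j : Fin m, theta p (a * q ^ (-(j : ℕ) - 1 : ℤ) * w j / z (σ j)) / theta p (q * w j / z (σ j))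

/-- The subtuple of `x` indexed by the elements of `A` in increasing order. -/
def tup {K : ℕ} (x : Fin K → ℂ) (A : Finset (Fin K)) : Fin A.card → ℂ :=
  fun i => x ((A.orderIsoOfFin rfl) i)
/-- `q^λ`, using the fixed branch `logq` of `log q`. -/
def qpow (logq lam : ℂ) : ℂ := Complex.exp (lam * logq)

/-- The generalized elliptic 6j-symbol `R_{SU}^{TV}(λ; w; z)`. -/
def R6j (p q logq : ℂ) {M N : ℕ} (lam : ℂ) (w : Fin M → ℂ) (z : Fin N → ℂ)
    (S T : Finset (Fin M)) (U V : Finset (Fin N)) : ℂ :=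
  if S.card + U.card = T.card + V.card then
    poch p q (qpow logq (lam + 2 + M + N - 2 * (S.card + U.card))) S.card /
      (poch p q (qpow logq (lam + 2 + M - 2 * T.card)) T.card *
        poch p q (qpow logq (lam + 2 + M + N - 2 * (S.card + U.card))) V.card) *
    ∑ X ∈ (Sᶜ ∩ Tᶜ).powerset, ∑ Y ∈ (U ∩ V).powerset,
      if (Y.card : ℤ) - X.card = (S.card : ℤ) + U.card - M then
        theta p q ^ (U.card + V.card - 2 * Y.card) *
        (poch p q (qpow logq (lam + 2 + N - U.card - Y.card)) Y.card /
          poch p q (qpow logq (-lam + 2 * T.card - M)) (V.card - Y.card)) *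
        (∏ i ∈ T, ∏ j ∈ Tᶜ \ X, theta p (q * w i / w j) / theta p (w i / w j)) *
        (∏ i ∈ Sᶜ \ X, ∏ j ∈ X, theta p (q * w i / w j) / theta p (w i / w j)) *
        (∏ i ∈ V \ Y, ∏ j ∈ Vᶜ, theta p (q * z i / z j) / theta p (z i / z j)) *
        (∏ i ∈ Y, ∏ j ∈ U \ Y, theta p (q * z i / z j) / theta p (z i / z j)) *
        (∏ i ∈ Y, ∏ j ∈ X, theta p (q * z i / w j) / theta p (z i / w j)) *
        (∏ i ∈ Xᶜ, ∏ j ∈ Yᶜ, theta p (w i / z j) / theta p (q * w i / z j)) *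
        (∏ i ∈ Sᶜ \ X, ∏ j ∈ U \ Y, theta p (q * w i / z j) / theta p (w i / z j)) *
        (∏ i ∈ Tᶜ \ X, ∏ j ∈ V \ Y, theta p (q * w i / z j) / theta p (w i / z j)) *
        Phi p q (tup w (Sᶜ \ X)) (tup z (U \ Y))
          (qpow logq (lam + 2 + N - U.card - Y.card)) *
        Phi p q (tup w (Tᶜ \ X)) (tup z (V \ Y))
          (qpow logq (-lam + T.card - X.card))
      else 0
  else 0
/-- Vanishing conditions for generalized elliptic 6j-symbols. -/
theorem vanishing_conditions_for_generalized_elliptic_6j_symbols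
    (p q logq : ℂ) (hp0 : p ≠ 0) (hp1 : ‖p‖ < 1) (hq : q ≠ 0)
    (hlogq : Complex.exp logq = q)
    (M N : ℕ) (lam : ℂ) (w : Fin M → ℂ) (z : Fin N → ℂ)
    (hw0 : ∀ i, w i ≠ 0) (hz0 : ∀ i, z i ≠ 0)
    (S T : Finset (Fin M)) (U V : Finset (Fin N))
    (hbal : S.card + U.card = T.card + V.card)
    (hlam : ∀ k : ℤ, theta p (qpow logq (lam + k)) ≠ 0 ∧ theta p (qpow logq (-lam + k)) ≠ 0)
    (hww : ∀ i j, i ≠ j → Gen p q (w i / w j))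
    (hzz : ∀ i j, i ≠ j → Gen p q (z i / z j))
    (hwz : ∀ i j, Gen p q (w i / z j))
    (hvan : V.card < (S \ T).card ∨ U.card < (T \ S).card ∨
      Sᶜ.card < (U \ V).card ∨ Tᶜ.card < (V \ U).card) :
    R6j p q logq lam w z S T U V = 0 := by
  unfold R6j
  rw [if_pos hbal, mul_eq_zero]
  right
  apply Finset.sum_eq_zero
  intro X hX
  apply Finset.sum_eq_zero
  intro Y hY
  rw [if_neg]
  intro h
  have hXc : X.card ≤ (Sᶜ ∩ Tᶜ).card := Finset.card_le_card (Finset.mem_powerset.mp hX)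
  have hYc : Y.card ≤ (U ∩ V).card := Finset.card_le_card (Finset.mem_powerset.mp hY)
  have h1 : (Sᶜ ∩ Tᶜ).card = M - (S ∪ T).card := by
    rw [← Finset.compl_union, Finset.card_compl, Fintype.card_fin]
  have h2 : (S ∪ T).card ≤ M := le_of_le_of_eq (Finset.card_le_univ _) (by simp)
  have e1 : (T \ S).card + S.card = (T ∪ S).card := Finset.card_sdiff_add_card T S
  have e2 : (S \ T).card + T.card = (S ∪ T).card := Finset.card_sdiff_add_card S T
  have e3 : (T ∪ S).card = (S ∪ T).card := by rw [Finset.union_comm]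
  have e4 : (U \ V).card + V.card = (U ∪ V).card := Finset.card_sdiff_add_card U V
  have e5 : (V \ U).card + U.card = (V ∪ U).card := Finset.card_sdiff_add_card V U
  have e6 : (V ∪ U).card = (U ∪ V).card := by rw [Finset.union_comm]
  have e7 : (U ∩ V).card + (U ∪ V).card = U.card + V.card :=
    Finset.card_inter_add_card_union U V
  have e8 : Sᶜ.card = M - S.card := by rw [Finset.card_compl, Fintype.card_fin]
  have e9 : Tᶜ.card = M - T.card := by rw [Finset.card_compl, Fintype.card_fin]
  have e10 : S.card ≤ M := le_of_le_of_eq (Finset.card_le_univ _) (by simp)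
  have e11 : T.card ≤ M := le_of_le_of_eq (Finset.card_le_univ _) (by simp)
  rcases hvan with hv | hv | hv | hv <;> omega
end
end

section
/- Evaluation of generalized elliptic 6j-symbols with V = ∅: For nonnegative integers M, N, generic λ ∈ ℂ, w ∈ (ℂ^×)^M, z ∈ (ℂ^×)^N, and subsets S,T ⊆ [M], U ⊆ [N] with |S|+|U| = |T|: if S ⊆ T, then R_{SU}^{T∅}(λ; w; z) = θ(q)^{|U|}·∏_{i∈T∖S, j∈U}[θ(q w_i/z_j)/θ(w_i/z_j)]·∏_{i∈T∖S, j∈T^c}[θ(q w_i/w_j)/θ(w_i/w_j)]·∏_{i∈T, j∈[N]}[θ(w_i/z_j)/θ(q w_i/z_j)]·[(q^{λ+2+M+N−2|T|})_{|S|}/(q^{λ+2+M−2|T|})_{|T|}]·Φ(w_{T∖S}; z_U; q^{λ+2+N−|U|}); if S ⊄ T, then R_{SU}^{T∅}(λ; w; z) = 0. -/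
noncomputable section
open Finset
set_option maxHeartbeats 1000000

lemma Phi_zero (p q : ℂ) {m n : ℕ} (hm : m = 0) (hn : n = 0)
    (w : Fin m → ℂ) (z : Fin n → ℂ) (a : ℂ) : Phi p q w z a = 1 := by
  subst hm; subst hn
  haveI : Unique (Fin 0 ≃ Fin 0) := ⟨⟨Equiv.refl _⟩, fun a => Subsingleton.elim _ _⟩
  simp [Phi]

lemma poch_zero (p q x : ℂ) : poch p q x 0 = 1 := by simp [poch]

/-- Evaluation of generalized elliptic 6j-symbols with `V = ∅`: the symbol vanishes
unless `S ⊆ T`, in which case it is an elementary factor times a single elliptic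
weight function. -/
theorem evaluation_of_generalized_elliptic_6j_symbols_V_empty
    (p q logq : ℂ) (hp0 : p ≠ 0) (hp1 : ‖p‖ < 1) (hq : q ≠ 0)
    (hlogq : Complex.exp logq = q)
    (M N : ℕ) (lam : ℂ) (w : Fin M → ℂ) (z : Fin N → ℂ)
    (hw0 : ∀ i, w i ≠ 0) (hz0 : ∀ i, z i ≠ 0)
    (S T : Finset (Fin M)) (U : Finset (Fin N))
    (hbal : S.card + U.card = T.card)
    (hlam : ∀ k : ℤ, theta p (qpow logq (lam + k)) ≠ 0 ∧ theta p (qpow logq (-lam + k)) ≠ 0)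
    (hww : ∀ i j, i ≠ j → Gen p q (w i / w j))
    (hzz : ∀ i j, i ≠ j → Gen p q (z i / z j))
    (hwz : ∀ i j, Gen p q (w i / z j)) :
    R6j p q logq lam w z S T U (∅ : Finset (Fin N)) =
      if S ⊆ T then
        theta p q ^ U.card *
        (∏ i ∈ T \ S, ∏ j ∈ U, theta p (q * w i / z j) / theta p (w i / z j)) *
        (∏ i ∈ T \ S, ∏ j ∈ Tᶜ, theta p (q * w i / w j) / theta p (w i / w j)) *
        (∏ i ∈ T, ∏ j : Fin N, theta p (w i / z j) / theta p (q * w i / z j)) *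
        (poch p q (qpow logq (lam + 2 + M + N - 2 * T.card)) S.card /
          poch p q (qpow logq (lam + 2 + M - 2 * T.card)) T.card) *
        Phi p q (tup w (T \ S)) (tup z U) (qpow logq (lam + 2 + N - U.card))
      else 0 := by
  classical
  have hTM : T.card ≤ M := by simpa using T.card_le_univ
  have hcomplT : Tᶜ.card = M - T.card := by simp [Finset.card_compl]
  have hcast : (S.card : ℂ) + U.card = T.card := by exact_mod_cast hbal
  unfold R6j
  rw [if_pos (by simp [hbal])]
  simp only [Finset.inter_empty, Finset.powerset_empty, Finset.sum_singleton,
    Finset.card_empty, Finset.sdiff_empty, Nat.cast_zero, sub_zero, zero_sub,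
    Finset.compl_empty, mul_zero, Nat.sub_zero, add_zero, Nat.sub_zero, poch_zero,
    Finset.prod_empty, mul_one, div_one, Finset.sdiff_self]
  by_cases hST : S ⊆ T
  · rw [if_pos hST]
    have hSTc : Sᶜ ∩ Tᶜ = Tᶜ := Finset.inter_eq_right.mpr (Finset.compl_subset_compl.mpr hST)
    rw [hSTc]
    rw [Finset.sum_eq_single_of_mem Tᶜ (Finset.mem_powerset_self _) ?h0]
    · rw [if_pos (by push_cast [hcomplT]; omega)]
      simp only [Finset.sdiff_empty, Finset.sdiff_self, Finset.prod_empty,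
        Finset.prod_const_one, mul_one, compl_compl]
      rw [compl_sdiff_compl]
      rw [(Finset.sdiff_empty : U \ ∅ = U), Finset.sdiff_self Tᶜ,
        (Finset.sdiff_empty : (∅ : Finset (Fin N)) \ ∅ = ∅)]
      rw [Phi_zero p q (by simp) (by simp) (tup w ∅) (tup z ∅)]
      rw [hcast]
      ring
    case h0 =>
      intro X hX hXne
      rw [if_neg]
      have h1 : X ⊂ Tᶜ := Finset.ssubset_iff_subset_ne.mpr ⟨Finset.mem_powerset.mp hX, hXne⟩
      have h2 : X.card < M - T.card := hcomplT ▸ Finset.card_lt_card h1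
      intro hcond
      omega
  · rw [if_neg hST]
    rw [Finset.sum_eq_zero, mul_zero]
    intro X hX
    rw [if_neg]
    have h1 : X ⊆ Sᶜ ∩ Tᶜ := Finset.mem_powerset.mp hX
    have h2 : Sᶜ ∩ Tᶜ ⊂ Tᶜ := by
      refine Finset.ssubset_iff_subset_ne.mpr ⟨Finset.inter_subset_right, fun h => hST ?_⟩
      have := Finset.inter_eq_right.mp h
      exact Finset.compl_subset_compl.mp this
    have h3 : X.card < M - T.card := by
      have := lt_of_le_of_lt (Finset.card_le_card h1) (Finset.card_lt_card h2)
      omega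
    intro hcond
    omega
end
end

section
/- Factorization of the elliptic weight function at a geometric progression in the second argument: For n ≥ 1, generic w ∈ (ℂ^×)^n, ζ ∈ ℂ^× and a ∈ ℂ^×, if z_j = q^{j−1}ζ for j = 1,…,n, then Φ(w; z; a) = [(q)_n/θ(q)^n]·∏_{j=1}^n [θ(q^{−n} a w_j/ζ)/θ(q w_j/ζ)], where (q)_n = θ(q)θ(q²)⋯θ(q^n). -/
noncomputable section
open Finset

open Filter in
lemma tprod_eq_zero_of (f : ℕ → ℂ) (i0 : ℕ) (h : f i0 = 0) : ∏' i, f i = 0 := by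
  have hp : HasProd f 0 := by
    have he : ∀ᶠ s : Finset ℕ in atTop, ∏ i ∈ s, f i = (0:ℂ) := by
      filter_upwards [eventually_ge_atTop ({i0} : Finset ℕ)] with s hs
      exact Finset.prod_eq_zero (by simpa using hs) h
    exact Tendsto.congr' (by filter_upwards [he] with s hs; exact hs.symm) tendsto_const_nhds
  exact hp.tprod_eq

lemma theta_one (p : ℂ) : theta p 1 = 0 := by
  rw [theta]; exact tprod_eq_zero_of _ 0 (by norm_num)

lemma prod_ratio_up (f : ℕ → ℂ) (hf : ∀ j, f j ≠ 0) (m : ℕ) :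
    ∏ j ∈ Finset.range m, f (j+1) / f j = f m / f 0 := by
  induction m with
  | zero => simp [div_self (hf 0)]
  | succ m ih =>
      rw [Finset.prod_range_succ, ih, div_mul_div_comm, mul_comm (f 0) (f m)]
      exact mul_div_mul_left _ _ (hf m)

lemma prod_ratio_down (f : ℕ → ℂ) (hf : ∀ j, f j ≠ 0) (m : ℕ) :
    ∏ j ∈ Finset.range m, f j / f (j+1) = f 0 / f m := by
  induction m with
  | zero => simp [div_self (hf 0)]
  | succ m ih =>
      rw [Finset.prod_range_succ, ih, div_mul_div_comm, mul_comm (f m) (f (m+1))]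
      exact mul_div_mul_right _ _ (hf m)

lemma arg1 {q ζ : ℂ} (hq : q ≠ 0) (hζ : ζ ≠ 0) (A B : ℕ) (γ : ℤ) (h : (A:ℤ) + 1 - B = γ) :
    q * (q ^ A * ζ) / (q ^ B * ζ) = q ^ γ := by
  subst h
  rw [zpow_sub₀ hq, zpow_add₀ hq, zpow_one, zpow_natCast, zpow_natCast]
  field_simp

lemma arg2 {q ζ : ℂ} (hq : q ≠ 0) (hζ : ζ ≠ 0) (x : ℂ) (B : ℕ) (γ : ℤ) (h : -(B:ℤ) = γ) :
    x / (q ^ B * ζ) = q ^ γ * (x / ζ) := by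
  subst h
  rw [zpow_neg, zpow_natCast]
  field_simp

lemma arg3 {q ζ : ℂ} (hq : q ≠ 0) (hζ : ζ ≠ 0) (A B : ℕ) (γ : ℤ) (h : (A:ℤ) - B = γ) :
    (q ^ A * ζ) / (q ^ B * ζ) = q ^ γ := by
  subst h
  rw [zpow_sub₀ hq, zpow_natCast, zpow_natCast]
  field_simp

lemma arg4 {q ζ : ℂ} (hq : q ≠ 0) (hζ : ζ ≠ 0) (x : ℂ) (B : ℕ) (γ : ℤ) (h : 1 - (B:ℤ) = γ) :
    q * x / (q ^ B * ζ) = q ^ γ * (x / ζ) := by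
  subst h
  rw [zpow_sub₀ hq, zpow_one, zpow_natCast]
  field_simp

lemma arg5 {q ζ : ℂ} (hq : q ≠ 0) (hζ : ζ ≠ 0) (c x : ℂ) (α : ℤ) (B : ℕ) (γ : ℤ)
    (h : α - B = γ) : c * q ^ α * x / (q ^ B * ζ) = q ^ γ * c * x / ζ := by
  subst h
  rw [zpow_sub₀ hq, zpow_natCast]
  field_simp
  try constructor
  all_goals first | ring | tauto

lemma arg6 {q ζ : ℂ} (x : ℂ) : q * x / ζ = q ^ (1:ℤ) * (x / ζ) := by
  rw [zpow_one, mul_div_assoc]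

lemma exists_succ_pair {n : ℕ} (σ : Fin n ≃ Fin n) (hσ : σ ≠ Fin.revPerm) :
    ∃ i j : Fin n, i < j ∧ (σ j : ℕ) = (σ i : ℕ) + 1 := by
  match n with
  | 0 => exact absurd (Equiv.ext (fun i => i.elim0)) hσ
  | Nat.succ m =>
    by_contra hcon
    push_neg at hcon
    have hanti : StrictAnti (fun k : Fin (m+1) => σ.symm k) := by
      rw [Fin.strictAnti_iff_succ_lt]
      intro k
      rcases lt_trichotomy (σ.symm k.succ) (σ.symm k.castSucc) with h|h|h
      · exact h
      · exact absurd (by simpa using congrArg σ h) (show k.castSucc < k.succ from Fin.castSucc_lt_succ).ne'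
      · exact absurd (by simp [Fin.val_succ]) (hcon _ _ h)
    have hmono : StrictMono (fun k : Fin (m+1) => σ.symm (Fin.rev k)) :=
      fun a b hab => hanti (Fin.rev_lt_rev.mpr hab)
    have hr : Set.range (fun k : Fin (m+1) => σ.symm (Fin.rev k)) =
        Set.range (id : Fin (m+1) → Fin (m+1)) := by
      rw [Set.range_id]
      exact Set.range_eq_univ.mpr fun y => ⟨Fin.rev (σ y), by simp⟩
    have hWF : WellFoundedLT (Fin (m+1)) := inferInstance
    have := (@StrictMono.range_inj _ _ _ _ hWF _ _ hmono strictMono_id).1 hr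
    refine hσ (Equiv.ext fun k => ?_)
    have h1 : σ.symm (Fin.rev k) = k := congrFun this k
    have h2 : Fin.rev k = σ k := (Equiv.symm_apply_eq σ).mp h1
    rw [Fin.revPerm_apply, ← h2]

lemma inner_prod (p q : ℂ) (hq0 : ∀ k : ℤ, k ≠ 0 → theta p (q ^ k) ≠ 0)
    (u : ℂ) (hu : ∀ k : ℤ, theta p (q ^ k * u) ≠ 0) (n iN : ℕ) (hi : iN < n) :
    (∏ m ∈ Finset.range n, if iN < m then
        (theta p (q ^ ((m:ℤ) - iN + 1)) / theta p (q ^ ((m:ℤ) - iN))) *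
        (theta p (q ^ ((m:ℤ) + 1 - n) * u) / theta p (q ^ ((m:ℤ) + 2 - n) * u)) else 1)
      = (theta p (q ^ ((n:ℤ) - iN)) / theta p (q ^ (1:ℤ))) *
        (theta p (q ^ ((iN:ℤ) + 2 - n) * u) / theta p (q ^ (1:ℤ) * u)) := by
  rw [← Finset.prod_filter]
  have hfil : (Finset.range n).filter (fun m => iN < m) = Finset.Ico (iN+1) n := by
    ext x; simp [Finset.mem_Ico]; omega
  rw [hfil, Finset.prod_Ico_eq_prod_range]
  have hcongr : ∀ r ∈ Finset.range (n - (iN+1)),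
      (theta p (q ^ (((iN+1+r : ℕ):ℤ) - iN + 1)) / theta p (q ^ (((iN+1+r:ℕ):ℤ) - iN))) *
        (theta p (q ^ (((iN+1+r:ℕ):ℤ) + 1 - n) * u) / theta p (q ^ (((iN+1+r:ℕ):ℤ) + 2 - n) * u))
      = ((fun s : ℕ => theta p (q ^ ((s:ℤ) + 1))) (r+1) / (fun s : ℕ => theta p (q ^ ((s:ℤ) + 1))) r) *
        ((fun s : ℕ => theta p (q ^ ((iN:ℤ) + 2 - n + s) * u)) r /
          (fun s : ℕ => theta p (q ^ ((iN:ℤ) + 2 - n + s) * u)) (r+1)) := by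
    intro r _
    simp only []
    rw [show ((iN+1+r : ℕ):ℤ) - iN + 1 = ((r+1:ℕ):ℤ) + 1 by push_cast; ring,
        show ((iN+1+r : ℕ):ℤ) - iN = ((r:ℕ):ℤ) + 1 by push_cast; ring,
        show ((iN+1+r : ℕ):ℤ) + 1 - n = (iN:ℤ) + 2 - n + (r:ℕ) by push_cast; ring,
        show ((iN+1+r : ℕ):ℤ) + 2 - n = (iN:ℤ) + 2 - n + ((r+1:ℕ):ℤ) by push_cast; ring]
  rw [Finset.prod_congr rfl hcongr, Finset.prod_mul_distrib,
      prod_ratio_up _ (fun s => hq0 ((s:ℤ)+1) (by omega)),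
      prod_ratio_down _ (fun s => hu _)]
  have e1 : (((n - (iN+1) : ℕ):ℤ) + 1) = (n:ℤ) - iN := by omega
  have e2 : ((0:ℕ):ℤ) + 1 = (1:ℤ) := by norm_num
  have e3 : (iN:ℤ) + 2 - n + ((0:ℕ):ℤ) = (iN:ℤ) + 2 - n := by norm_num
  have e4 : (iN:ℤ) + 2 - n + ((n - (iN+1) : ℕ):ℤ) = 1 := by omega
  rw [e1, e2, e3, e4]

set_option maxHeartbeats 1000000 in
/-- Factorization of the elliptic weight function when the second argument is
the geometric progression `z_j = q^(j-1) ζ`. -/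
theorem factorization_of_elliptic_weight_function_second_argument
    (p q : ℂ) (hp0 : p ≠ 0) (hp1 : ‖p‖ < 1) (hq : q ≠ 0)
    (n : ℕ) (hn : 1 ≤ n) (w : Fin n → ℂ) (ζ a : ℂ) (hζ : ζ ≠ 0) (ha : a ≠ 0)
    (hw0 : ∀ i, w i ≠ 0)
    (hq0 : ∀ k : ℤ, k ≠ 0 → theta p (q ^ k) ≠ 0)
    (hwζ : ∀ j, Gen p q (w j / ζ)) :
    Phi p q w (fun j : Fin n => q ^ (j : ℕ) * ζ) a =
      poch p q q n / theta p q ^ n *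
        ∏ j : Fin n, theta p (q ^ (-(n : ℤ)) * a * w j / ζ) / theta p (q * w j / ζ) := by
  classical
  have ht : ∀ (i : Fin n) (k : ℤ), theta p (q ^ k * (w i / ζ)) ≠ 0 := fun i k => (hwζ i k).1
  -- all non-reversal permutations contribute zero
  have hzero : ∀ σ : Fin n ≃ Fin n, σ ∈ (Finset.univ : Finset (Fin n ≃ Fin n)) →
      σ ≠ Fin.revPerm →
      (∏ i : Fin n, ∏ j : Fin n,
        if i < j then
          theta p (q * (q ^ ((σ i : ℕ)) * ζ) / (q ^ ((σ j : ℕ)) * ζ)) *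
              theta p (w i / (q ^ ((σ j : ℕ)) * ζ)) /
            (theta p ((q ^ ((σ i : ℕ)) * ζ) / (q ^ ((σ j : ℕ)) * ζ)) *
              theta p (q * w i / (q ^ ((σ j : ℕ)) * ζ)))
        else 1) *
      ∏ j : Fin n, theta p (a * q ^ (-(j : ℕ) - 1 : ℤ) * w j / (q ^ ((σ j : ℕ)) * ζ)) /
          theta p (q * w j / (q ^ ((σ j : ℕ)) * ζ)) = 0 := by
    intro σ _ hσ
    obtain ⟨i, j, hij, hval⟩ := exists_succ_pair σ hσ
    have harg : q * (q ^ ((σ i : ℕ)) * ζ) / (q ^ ((σ j : ℕ)) * ζ) = 1 := by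
      rw [hval, pow_succ]
      field_simp
    refine mul_eq_zero_of_left ?_ _
    refine Finset.prod_eq_zero (Finset.mem_univ i) ?_
    refine Finset.prod_eq_zero (Finset.mem_univ j) ?_
    rw [if_pos hij, harg, theta_one, zero_mul, zero_div]
  have hstep : Phi p q w (fun j : Fin n => q ^ (j : ℕ) * ζ) a =
      (∏ i : Fin n, ∏ j : Fin n,
        if i < j then
          theta p (q * (q ^ ((Fin.revPerm i : ℕ)) * ζ) / (q ^ ((Fin.revPerm j : ℕ)) * ζ)) *
              theta p (w i / (q ^ ((Fin.revPerm j : ℕ)) * ζ)) /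
            (theta p ((q ^ ((Fin.revPerm i : ℕ)) * ζ) / (q ^ ((Fin.revPerm j : ℕ)) * ζ)) *
              theta p (q * w i / (q ^ ((Fin.revPerm j : ℕ)) * ζ)))
        else 1) *
      ∏ j : Fin n, theta p (a * q ^ (-(j : ℕ) - 1 : ℤ) * w j / (q ^ ((Fin.revPerm j : ℕ)) * ζ)) /
          theta p (q * w j / (q ^ ((Fin.revPerm j : ℕ)) * ζ)) := by
    rw [Phi]
    exact Finset.sum_eq_single_of_mem Fin.revPerm (Finset.mem_univ _) hzero
  rw [hstep]
  simp only [Fin.revPerm_apply]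
  -- rewrite the double product
  have hP : (∏ i : Fin n, ∏ j : Fin n,
        if i < j then
          theta p (q * (q ^ ((Fin.rev i : ℕ)) * ζ) / (q ^ ((Fin.rev j : ℕ)) * ζ)) *
              theta p (w i / (q ^ ((Fin.rev j : ℕ)) * ζ)) /
            (theta p ((q ^ ((Fin.rev i : ℕ)) * ζ) / (q ^ ((Fin.rev j : ℕ)) * ζ)) *
              theta p (q * w i / (q ^ ((Fin.rev j : ℕ)) * ζ)))
        else 1)
      = ∏ i : Fin n, ((theta p (q ^ ((n:ℤ) - ((i:ℕ):ℤ))) / theta p (q ^ (1:ℤ))) *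
          (theta p (q ^ (((i:ℕ):ℤ) + 2 - n) * (w i / ζ)) /
            theta p (q ^ (1:ℤ) * (w i / ζ)))) := by
    refine Finset.prod_congr rfl (fun i _ => ?_)
    have hinner : ∀ j : Fin n,
        (if i < j then
          theta p (q * (q ^ ((Fin.rev i : ℕ)) * ζ) / (q ^ ((Fin.rev j : ℕ)) * ζ)) *
              theta p (w i / (q ^ ((Fin.rev j : ℕ)) * ζ)) /
            (theta p ((q ^ ((Fin.rev i : ℕ)) * ζ) / (q ^ ((Fin.rev j : ℕ)) * ζ)) *
              theta p (q * w i / (q ^ ((Fin.rev j : ℕ)) * ζ)))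
        else 1) =
        (fun m : ℕ => if (i:ℕ) < m then
          (theta p (q ^ ((m:ℤ) - (i:ℕ) + 1)) / theta p (q ^ ((m:ℤ) - (i:ℕ)))) *
          (theta p (q ^ ((m:ℤ) + 1 - n) * (w i / ζ)) /
            theta p (q ^ ((m:ℤ) + 2 - n) * (w i / ζ))) else 1) (j:ℕ) := by
      intro j
      by_cases h : i < j
      · have hvn : ((Fin.rev i : ℕ):ℤ) = (n:ℤ) - 1 - (i:ℕ) := by
          rw [Fin.val_rev]; have := i.isLt; omega
        have hvnj : ((Fin.rev j : ℕ):ℤ) = (n:ℤ) - 1 - (j:ℕ) := by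
          rw [Fin.val_rev]; have := j.isLt; omega
        simp only [if_pos h, if_pos (show (i:ℕ) < (j:ℕ) from h)]
        rw [arg1 hq hζ _ _ (((j:ℕ):ℤ) - ((i:ℕ):ℤ) + 1) (by rw [hvn, hvnj]; ring),
            arg2 hq hζ (w i) _ (((j:ℕ):ℤ) + 1 - n) (by rw [hvnj]; ring),
            arg3 hq hζ _ _ (((j:ℕ):ℤ) - ((i:ℕ):ℤ)) (by rw [hvn, hvnj]; ring),
            arg4 hq hζ (w i) _ (((j:ℕ):ℤ) + 2 - n) (by rw [hvnj]; ring),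
            mul_div_mul_comm]
      · simp only [if_neg h, if_neg (show ¬((i:ℕ) < (j:ℕ)) from h)]
    rw [Finset.prod_congr rfl (fun j _ => hinner j),
        Fin.prod_univ_eq_prod_range (fun m : ℕ => if (i:ℕ) < m then
          (theta p (q ^ ((m:ℤ) - (i:ℕ) + 1)) / theta p (q ^ ((m:ℤ) - (i:ℕ)))) *
          (theta p (q ^ ((m:ℤ) + 1 - n) * (w i / ζ)) /
            theta p (q ^ ((m:ℤ) + 2 - n) * (w i / ζ))) else 1) n]
    exact inner_prod p q hq0 (w i / ζ) (ht i) n (i:ℕ) i.isLt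
  have hQ : (∏ j : Fin n, theta p (a * q ^ (-(j : ℕ) - 1 : ℤ) * w j /
          (q ^ ((Fin.rev j : ℕ)) * ζ)) /
        theta p (q * w j / (q ^ ((Fin.rev j : ℕ)) * ζ)))
      = ∏ j : Fin n, theta p (q ^ (-(n:ℤ)) * a * w j / ζ) /
          theta p (q ^ (((j:ℕ):ℤ) + 2 - n) * (w j / ζ)) := by
    refine Finset.prod_congr rfl fun j _ => ?_
    have hvnj : ((Fin.rev j : ℕ):ℤ) = (n:ℤ) - 1 - (j:ℕ) := by
      rw [Fin.val_rev]; have := j.isLt; omega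
    rw [arg5 hq hζ a (w j) _ _ (-(n:ℤ)) (by rw [hvnj]; ring),
        arg4 hq hζ (w j) _ (((j:ℕ):ℤ) + 2 - n) (by rw [hvnj]; ring)]
  rw [hP, hQ, Finset.prod_mul_distrib, mul_assoc, ← Finset.prod_mul_distrib]
  congr 1
  · -- ∏ θ(q^{n-i})/θ(q) = poch / θ(q)^n
    rw [Finset.prod_div_distrib, Finset.prod_const, zpow_one]
    congr 1
    · rw [Fin.prod_univ_eq_prod_range (fun m : ℕ => theta p (q ^ ((n:ℤ) - (m:ℤ)))) n,
          poch, ← Finset.prod_range_reflect]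
      refine Finset.prod_congr rfl fun m hm => ?_
      rw [Finset.mem_range] at hm
      congr 1
      rw [show ((n:ℤ) - ((n-1-m : ℕ):ℤ)) = ((m:ℕ):ℤ) + 1 by omega, zpow_add_one₀ hq, zpow_natCast]
    · simp
  · refine Finset.prod_congr rfl fun i _ => ?_
    rw [arg6 (q := q) (ζ := ζ) (w i)]
    have h1 := ht i (((i:ℕ):ℤ) + 2 - n)
    rw [div_mul_div_comm, mul_comm (theta p (q ^ (1:ℤ) * (w i / ζ)))
      (theta p (q ^ (((i:ℕ):ℤ) + 2 - n) * (w i / ζ)))]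
    exact mul_div_mul_left _ _ h1
end
end
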